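/- Let T = (T, e, m) be a monad on a preorder-enriched category (take X = the category of partially ordered sets and monotone maps, T a 2-functor). If T e_X ≤ e_{T X} for all X, then for all X, m_X is left adjoint to e_{T X} and T e_X is left adjoint to m_X. -/

import Mathlib

open CategoryTheory

/-- Application of a morphism of `PartOrd` to an element. -/
def PartOrd.ap {X Y : PartOrd} (f : X ⟶ Y) : X → Y := (show ↑X →o ↑Y from f.hom)

namespace PartOrd

lemma ap_comp {X Y Z : PartOrd} (f : X ⟶ Y) (g : Y ⟶ Z) (x : X) :
    ap (f ≫ g) x = ap g (ap f x) := rfl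

lemma ap_id {X : PartOrd} (x : X) : ap (𝟙 X) x = x := rfl

lemma ap_mono {X Y : PartOrd} (f : X ⟶ Y) {a b : X} (h : a ≤ b) : ap f a ≤ ap f b :=
  (show ↑X →o ↑Y from f.hom).monotone h

end PartOrd

open PartOrd in
/-- Kock–Zöberlein theorem, one implication: for a 2-monad `T` on the category of posets
with `T e_X ≤ e_{T X}` for all `X`, one has `m_X ⊣ e_{T X}` and `T e_X ⊣ m_X` for all `X`. -/
theorem stmt7 (T : Monad PartOrd)
    (h2 : ∀ {X Y : PartOrd} (f g : X ⟶ Y), (∀ x, ap f x ≤ ap g x) →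
      ∀ a, ap (T.map f) a ≤ ap (T.map g) a)
    (hKZ : ∀ (X : PartOrd) (a : T.obj X),
      ap (T.map (T.η.app X)) a ≤ ap (T.η.app (T.obj X)) a) :
    ∀ X : PartOrd,
      (∀ (a : T.obj (T.obj X)) (b : T.obj X),
        ap (T.μ.app X) a ≤ b ↔ a ≤ ap (T.η.app (T.obj X)) b) ∧
      (∀ (a : T.obj X) (b : T.obj (T.obj X)),
        ap (T.map (T.η.app X)) a ≤ b ↔ a ≤ ap (T.μ.app X) b) := by
  intro X
  -- unit laws pointwise
  have hru : ∀ (a : T.obj X), ap (T.μ.app X) (ap (T.η.app (T.obj X)) a) = a := by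
    intro a
    have h := congrArg (fun f => ap f a) (T.left_unit X)
    simp only [ap_comp, ap_id] at h
    exact h
  have hlu : ∀ (a : T.obj X), ap (T.μ.app X) (ap (T.map (T.η.app X)) a) = a := by
    intro a
    have h := congrArg (fun f => ap f a) (T.right_unit X)
    simp only [ap_comp, ap_id] at h
    exact h
  -- id ≤ e_{TX} ∘ m : from T m ∘ T e_{TX} = id ≤ T m ∘ e_{TTX} = e_{TX} ∘ m
  have key1 : ∀ (a : T.obj (T.obj X)), a ≤ ap (T.η.app (T.obj X)) (ap (T.μ.app X) a) := by
    intro a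
    have h1 : ap (T.map (T.μ.app X)) (ap (T.map (T.η.app (T.obj X))) a) = a := by
      have h := congrArg (fun f => ap f a) (congrArg T.map (T.left_unit X))
      simp only [Functor.id_obj, Functor.map_comp, ap_comp] at h
      rw [T.map_id] at h
      exact h
    have h2' : ap (T.map (T.η.app (T.obj X))) a ≤ ap (T.η.app (T.obj (T.obj X))) a :=
      hKZ (T.obj X) a
    have h3 : ap (T.map (T.μ.app X)) (ap (T.η.app (T.obj (T.obj X))) a)
        = ap (T.η.app (T.obj X)) (ap (T.μ.app X) a) := by
      have h := congrArg (fun f => ap f a) (T.η.naturality (T.μ.app X))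
      simp only [ap_comp] at h
      exact h.symm
    calc a = ap (T.map (T.μ.app X)) (ap (T.map (T.η.app (T.obj X))) a) := h1.symm
      _ ≤ ap (T.map (T.μ.app X)) (ap (T.η.app (T.obj (T.obj X))) a) := ap_mono _ h2'
      _ = ap (T.η.app (T.obj X)) (ap (T.μ.app X) a) := h3
  -- T e_X ∘ m ≤ id : T e ∘ m = m_{TX} ∘ TT e ≤ m_{TX} ∘ T e_{TX} = id
  have key2 : ∀ (b : T.obj (T.obj X)), ap (T.map (T.η.app X)) (ap (T.μ.app X) b) ≤ b := by
    intro b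
    have h1 : ap (T.map (T.η.app X)) (ap (T.μ.app X) b)
        = ap (T.μ.app (T.obj X)) (ap (T.map (T.map (T.η.app X))) b) := by
      have h := congrArg (fun f => ap f b) (T.μ.naturality (T.η.app X))
      simp only [ap_comp] at h
      exact h.symm
    have h2' : ap (T.map (T.map (T.η.app X))) b ≤ ap (T.map (T.η.app (T.obj X))) b :=
      h2 _ _ (hKZ X) b
    have h3 : ap (T.μ.app (T.obj X)) (ap (T.map (T.η.app (T.obj X))) b) = b := by
      have h := congrArg (fun f => ap f b) (T.right_unit (T.obj X))
      simp only [ap_comp, ap_id] at h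
      exact h
    calc ap (T.map (T.η.app X)) (ap (T.μ.app X) b)
        = ap (T.μ.app (T.obj X)) (ap (T.map (T.map (T.η.app X))) b) := h1
      _ ≤ ap (T.μ.app (T.obj X)) (ap (T.map (T.η.app (T.obj X))) b) := ap_mono _ h2'
      _ = b := h3
  constructor
  · intro a b
    constructor
    · intro h
      exact le_trans (key1 a) (ap_mono _ h)
    · intro h
      calc ap (T.μ.app X) a ≤ ap (T.μ.app X) (ap (T.η.app (T.obj X)) b) := ap_mono _ h
        _ = b := hru b
  · intro a b
    constructor
    · intro h
      calc a = ap (T.μ.app X) (ap (T.map (T.η.app X)) a) := (hlu a).symm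
        _ ≤ ap (T.μ.app X) b := ap_mono _ h
    · intro h
      exact le_trans (ap_mono _ h) (key2 b)
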